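/- Let τ, κ, φ, ψ be real numbers with φ ∈ (0, π), ψ ∈ (0, π), cos(τ/2) ≠ 0, and sin(τ/2 − κ) ≠ 0, satisfying tan(τ/2)·(cos(φ) + cos(ψ) − cos(φ)·cos(ψ) + cos(κ)·sin(φ)·sin(ψ) − 1) = sin(φ)·sin(ψ)·sin(κ). Set T = tan(φ/2)·sin(τ/2)/sin(τ/2 − κ). Then cos(ψ) = (T² − 1)/(T² + 1). -/

import Mathlib

open Real

/-- Solving the Eriksson-type perimeter formula for the angle ψ: the basis for
the angle-coordinate parametrization of spherical triangles with perimeter ≤ τ. -/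
theorem angle_coordinates_cos_psi (τ κ φ ψ : ℝ)
    (hφ0 : 0 < φ) (hφ1 : φ < π) (hψ0 : 0 < ψ) (hψ1 : ψ < π)
    (hτ : Real.cos (τ / 2) ≠ 0) (hκ : Real.sin (τ / 2 - κ) ≠ 0)
    (h : Real.tan (τ / 2) *
        (Real.cos φ + Real.cos ψ - Real.cos φ * Real.cos ψ +
          Real.cos κ * Real.sin φ * Real.sin ψ - 1) =
      Real.sin φ * Real.sin ψ * Real.sin κ) :
    Real.cos ψ =
      ((Real.tan (φ / 2) * Real.sin (τ / 2) / Real.sin (τ / 2 - κ)) ^ 2 - 1) /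
      ((Real.tan (φ / 2) * Real.sin (τ / 2) / Real.sin (τ / 2 - κ)) ^ 2 + 1) := by
  set sa := Real.sin (φ/2) with hsa
  set ca := Real.cos (φ/2) with hca
  set sb := Real.sin (ψ/2) with hsb
  set cb := Real.cos (ψ/2) with hcb
  set ss := Real.sin (τ/2) with hss
  set cs := Real.cos (τ/2) with hcs
  set sk := Real.sin (τ/2 - κ) with hsk
  set ck := Real.cos (τ/2 - κ) with hck
  have hsa0 : 0 < sa := Real.sin_pos_of_pos_of_lt_pi (by linarith) (by linarith [Real.pi_pos])
  have hca0 : 0 < ca := Real.cos_pos_of_mem_Ioo ⟨by linarith [Real.pi_pos], by linarith⟩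
  have hsb0 : 0 < sb := Real.sin_pos_of_pos_of_lt_pi (by linarith) (by linarith [Real.pi_pos])
  have hcb0 : 0 < cb := Real.cos_pos_of_mem_Ioo ⟨by linarith [Real.pi_pos], by linarith⟩
  have pa : sa^2 + ca^2 = 1 := Real.sin_sq_add_cos_sq _
  have pb : sb^2 + cb^2 = 1 := Real.sin_sq_add_cos_sq _
  have ps : ss^2 + cs^2 = 1 := Real.sin_sq_add_cos_sq _
  have e1 : Real.cos φ = 2*ca^2 - 1 := by
    rw [show φ = 2*(φ/2) by ring, Real.cos_two_mul]
  have e2 : Real.sin φ = 2*sa*ca := by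
    rw [show φ = 2*(φ/2) by ring, Real.sin_two_mul]
  have e3 : Real.cos ψ = 2*cb^2 - 1 := by
    rw [show ψ = 2*(ψ/2) by ring, Real.cos_two_mul]
  have e4 : Real.sin ψ = 2*sb*cb := by
    rw [show ψ = 2*(ψ/2) by ring, Real.sin_two_mul]
  have e5 : Real.sin κ = ss*ck - cs*sk := by
    rw [show κ = τ/2 - (τ/2 - κ) by ring, Real.sin_sub]
  have e6 : Real.cos κ = cs*ck + ss*sk := by
    rw [show κ = τ/2 - (τ/2 - κ) by ring, Real.cos_sub]
  have h2 : ss * (Real.cos φ + Real.cos ψ - Real.cos φ * Real.cos ψ +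
      Real.cos κ * Real.sin φ * Real.sin ψ - 1) =
      Real.sin φ * Real.sin ψ * Real.sin κ * cs := by
    rw [Real.tan_eq_sin_div_cos, div_mul_eq_mul_div, div_eq_iff hτ] at h
    exact h
  rw [e1, e2, e3, e4, e5, e6] at h2
  have factored : 4*sa*sb*(ca*cb*sk - ss*sa*sb) = 0 := by
    linear_combination h2 - 4*sa*ca*sb*cb*sk*ps - 4*ss*(1-cb^2)*pa - 4*ss*sa^2*pb
  have key : ca*cb*sk = ss*sa*sb := by
    have h4 : (4:ℝ)*sa*sb ≠ 0 := by positivity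
    have := mul_eq_zero.mp (by linear_combination factored :
      (4*sa*sb) * (ca*cb*sk - ss*sa*sb) = 0)
    rcases this with h' | h'
    · exact absurd h' h4
    · linarith
  have hca' : ca ≠ 0 := ne_of_gt hca0
  have hT : ((Real.tan (φ / 2) * ss / sk) ^ 2 + 1) ≠ 0 := by positivity
  have goal' : (2*cb^2-1) * ((sa*ss)^2 + (ca*sk)^2) = (sa*ss)^2 - (ca*sk)^2 := by
    linear_combination 2*(ca*sk*cb + sa*ss*sb)*key + 2*(sa*ss)^2*pb
  rw [eq_div_iff hT, Real.tan_eq_sin_div_cos, e3]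
  rw [← hsa, ← hca]
  field_simp
  linear_combination goal'
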